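/- lim_{n→∞} (n^2/ln n) * (g(n)/g(n+1) - 1) = 1, where g(n) = n^(1/n). -/

import Mathlib

open Filter Real

noncomputable def dd (n : ℕ) : ℝ := Real.log n / n - Real.log (n + 1) / (n + 1)

lemma dd_pos {n : ℕ} (hn : 3 ≤ n) : 0 < dd n := by
  have hn0 : (0:ℝ) < n := by positivity
  have hlog3 : (1:ℝ) < Real.log n := by
    have : Real.exp 1 < 3 := by
      have := Real.exp_one_lt_d9; linarith
    have h3 : (3:ℝ) ≤ n := by exact_mod_cast hn
    calc (1:ℝ) = Real.log (Real.exp 1) := (Real.log_exp 1).symm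
    _ < Real.log n := Real.log_lt_log (Real.exp_pos 1) (by linarith)
  have hle : (n:ℝ) * Real.log (1 + 1/n) ≤ 1 := by
    have h1 : Real.log (1 + 1/n) ≤ 1/n := by
      have := Real.log_le_sub_one_of_pos (x := 1 + 1/(n:ℝ)) (by positivity)
      linarith
    calc (n:ℝ) * Real.log (1 + 1/n) ≤ n * (1/n) := by
          exact mul_le_mul_of_nonneg_left h1 (le_of_lt hn0)
    _ = 1 := by field_simp
  have hnum : 0 < Real.log n - n * Real.log (1 + 1/n) := by linarith
  have hid : dd n = (Real.log n - n * Real.log (1 + 1/n)) / (n * (n+1)) := by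
    unfold dd
    have h1 : Real.log (1 + 1/(n:ℝ)) = Real.log (n+1) - Real.log n := by
      rw [show (1 : ℝ) + 1/n = (n+1)/n by field_simp, Real.log_div (by positivity) (ne_of_gt hn0)]
    rw [h1]; field_simp; ring
  rw [hid]; positivity

lemma dd_tendsto : Tendsto dd atTop (nhds 0) := by
  have h : Tendsto (fun x : ℝ => Real.log x / x) atTop (nhds 0) :=
    Real.isLittleO_log_id_atTop.tendsto_div_nhds_zero
  have h1 : Tendsto (fun n : ℕ => Real.log n / n) atTop (nhds 0) :=
    h.comp tendsto_natCast_atTop_atTop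
  have h2 : Tendsto (fun n : ℕ => Real.log ((n:ℝ)+1) / ((n:ℝ)+1)) atTop (nhds 0) :=
    h.comp (tendsto_atTop_add_const_right atTop 1 tendsto_natCast_atTop_atTop)
  have := h1.sub h2; rw [sub_zero] at this; exact this

lemma ratio_tendsto : Tendsto (fun n : ℕ => (Real.exp (dd n) - 1) / dd n) atTop (nhds 1) := by
  have hslope : Tendsto (fun x : ℝ => (Real.exp x - 1) / x) (nhdsWithin 0 {(0:ℝ)}ᶜ) (nhds 1) := by
    have := (Real.hasDerivAt_exp 0)
    rw [hasDerivAt_iff_tendsto_slope] at this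
    have h2 : Tendsto (fun x : ℝ => x⁻¹ * (Real.exp x - 1)) (nhdsWithin 0 {(0:ℝ)}ᶜ) (nhds 1) := by
      simpa [slope_fun_def, Real.exp_zero] using this
    exact h2.congr fun x => by rw [div_eq_inv_mul]
  have hdd : Tendsto dd atTop (nhdsWithin 0 {(0:ℝ)}ᶜ) := by
    refine tendsto_nhdsWithin_iff.2 ⟨dd_tendsto, ?_⟩
    filter_upwards [eventually_ge_atTop 3] with n hn
    exact Set.mem_compl_singleton_iff.2 (ne_of_gt (dd_pos hn))
  exact hslope.comp hdd

lemma a_tendsto :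
    Tendsto (fun n : ℕ => ((n:ℝ)^2 / Real.log n) * dd n) atTop (nhds 1) := by
  have hmul : Tendsto (fun n : ℕ => (n:ℝ) * Real.log (1 + 1/n)) atTop (nhds 1) :=
    (Real.tendsto_mul_log_one_add_div_atTop 1).comp tendsto_natCast_atTop_atTop
  have hloginv : Tendsto (fun n : ℕ => (Real.log n)⁻¹) atTop (nhds 0) :=
    (Real.tendsto_log_atTop.comp tendsto_natCast_atTop_atTop).inv_tendsto_atTop
  have hfrac : Tendsto (fun n : ℕ => (n:ℝ)/((n:ℝ)+1)) atTop (nhds 1) := by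
    have := tendsto_natCast_div_add_atTop (1:ℝ)
    simpa using this
  have hlim : Tendsto (fun n : ℕ => ((n:ℝ)/((n:ℝ)+1)) *
      (1 - ((n:ℝ) * Real.log (1 + 1/n)) * (Real.log n)⁻¹)) atTop (nhds 1) := by
    have := hfrac.mul ((tendsto_const_nhds (x := (1:ℝ))).sub (hmul.mul hloginv))
    simpa using this
  refine hlim.congr' ?_
  filter_upwards [eventually_ge_atTop 3] with n hn
  have hn0 : (0:ℝ) < n := by positivity
  have hlogn : Real.log n ≠ 0 := by
    have : (1:ℝ) < n := by exact_mod_cast lt_of_lt_of_le (by norm_num) hn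
    exact ne_of_gt (Real.log_pos this)
  have h1 : Real.log (1 + 1/(n:ℝ)) = Real.log ((n:ℝ)+1) - Real.log n := by
    rw [show (1 : ℝ) + 1/(n:ℝ) = ((n:ℝ)+1)/n by field_simp, Real.log_div (by positivity) (ne_of_gt hn0)]
  unfold dd
  rw [h1]
  field_simp
  ring

theorem stmt_13 :
    Tendsto
      (fun n : ℕ =>
        ((n : ℝ) ^ 2 / Real.log n) *
          ((n : ℝ) ^ ((1 : ℝ) / n) / ((n : ℝ) + 1) ^ ((1 : ℝ) / (n + 1)) - 1))
      atTop (nhds 1) := by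
  have h := a_tendsto.mul ratio_tendsto
  rw [one_mul] at h
  refine h.congr' ?_
  filter_upwards [eventually_ge_atTop 3] with n hn
  have hn0 : (0:ℝ) < n := by positivity
  have hd : dd n ≠ 0 := ne_of_gt (dd_pos hn)
  have hexp : (n : ℝ) ^ ((1 : ℝ) / n) / ((n : ℝ) + 1) ^ ((1 : ℝ) / (n + 1))
      = Real.exp (dd n) := by
    rw [Real.rpow_def_of_pos hn0, Real.rpow_def_of_pos (by positivity),
      ← Real.exp_sub]
    unfold dd
    push_cast
    ring_nf
  rw [hexp, mul_assoc, mul_comm (dd n), div_mul_cancel₀ _ hd]
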